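/- Let Ω be a nonempty bounded open convex subset of ℝ³ and let x, y ∈ Ω with dist(x,∂Ω) ≥ d₀ > 0 and dist(y,∂Ω) ≥ d₀. Then there is a constant C₆ depending only on Ω such that for every ζ ∈ ℝ³∖{0}: |p(x,ζ) − p(y,ζ)| ≤ C₆(1+d₀⁻¹)|x−y| and |τ₋(x,ζ) − τ₋(y,ζ)| ≤ C₆(1+d₀⁻¹)|x−y|/|ζ|. -/

import Mathlib

open MeasureTheory Real Set
open scoped ENNReal NNReal

noncomputable section

/-- Three-dimensional Euclidean space. -/
abbrev E3 : Type := EuclideanSpace ℝ (Fin 3)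

/-- Backward exit time: `τ₋(x,ζ) = sup{t ≥ 0 : x - sζ ∈ Ω for all s ∈ [0,t)}`. -/
def tauMinus (Ω : Set E3) (x ζ : E3) : ℝ :=
  sSup {t : ℝ | 0 ≤ t ∧ ∀ s ∈ Set.Ico (0 : ℝ) t, x - s • ζ ∈ Ω}

/-- Backward exit point: `p(x,ζ) = x - τ₋(x,ζ) ζ`. -/
def exitPoint (Ω : Set E3) (x ζ : E3) : E3 := x - tauMinus Ω x ζ • ζ

/-- The incoming boundary set `Γ₋`. -/
def GammaMinus (Ω : Set E3) : Set (E3 × E3) :=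
  {z | z.1 ∈ frontier Ω ∧ ∃ t : ℝ, 0 < t ∧ z.1 + t • z.2 ∈ Ω}

/-- Collision frequency `ν(ζ) = β₀ ∫ e^{-|η|²} |η-ζ|^γ dη`. -/
def nu (γ β₀ : ℝ) (ζ : E3) : ℝ :=
  β₀ * ∫ η : E3, Real.exp (-‖η‖ ^ 2) * ‖η - ζ‖ ^ γ

/-- The Grad-type pointwise bound (1.9) on the collision kernel `k`. -/
def KernelBound (γ δ C₁ : ℝ) (k : E3 → E3 → ℝ) : Prop :=
  ∀ ζ ζs : E3, ζ ≠ ζs →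
    |k ζ ζs| ≤ C₁ * ‖ζ - ζs‖⁻¹ * (1 + ‖ζ‖ + ‖ζs‖) ^ (-(1 - γ)) *
      Real.exp (-((1 - δ) / 4) *
        (‖ζ - ζs‖ ^ 2 + ((‖ζ‖ ^ 2 - ‖ζs‖ ^ 2) / ‖ζ - ζs‖) ^ 2))

/-- The gradient bound (1.10) on the collision kernel `k` (first-variable gradient),
together with differentiability of `k (·, ζ⁎)`. -/
def KernelGradBound (γ δ C₂ : ℝ) (k : E3 → E3 → ℝ) : Prop :=
  (∀ ζs : E3, Differentiable ℝ fun ζ => k ζ ζs) ∧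
  ∀ ζ ζs : E3, ζ ≠ ζs →
    ‖fderiv ℝ (fun w => k w ζs) ζ‖ ≤
      C₂ * (1 + ‖ζ‖) * (‖ζ - ζs‖ ^ 2)⁻¹ * (1 + ‖ζ‖ + ‖ζs‖) ^ (-(1 - γ)) *
        Real.exp (-((1 - δ) / 4) *
          (‖ζ - ζs‖ ^ 2 + ((‖ζ‖ ^ 2 - ‖ζs‖ ^ 2) / ‖ζ - ζs‖) ^ 2))

/-- The integral operator `K(f)(x,ζ) = ∫ k(ζ,ζ⁎) f(x,ζ⁎) dζ⁎`. -/
def Kop (k : E3 → E3 → ℝ) (f : E3 → E3 → ℝ) (x ζ : E3) : ℝ :=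
  ∫ ζs : E3, k ζ ζs * f x ζs

/-- `f` is a mild solution of the stationary linearized Boltzmann equation:
it satisfies the exponential (Duhamel) integral form along backward characteristics,
a.e. on `Ω × ℝ³`. -/
def MildSolution (Ω : Set E3) (γ β₀ : ℝ) (k f : E3 → E3 → ℝ) : Prop :=
  ∀ᵐ z : E3 × E3, z.1 ∈ Ω →
    f z.1 z.2 =
      f (exitPoint Ω z.1 z.2) z.2 * Real.exp (-(nu γ β₀ z.2) * tauMinus Ω z.1 z.2) +
      ∫ s in (0 : ℝ)..(tauMinus Ω z.1 z.2),
        Real.exp (-(nu γ β₀ z.2) * s) * Kop k f (z.1 - s • z.2) z.2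

/-- The function `G` from the mixture lemma, written as an integral over space
and speed:
`G(x₀,ζ) = ∫₀^∞ ∫_Ω k(ζ, ρ(x₀−y)/|x₀−y|) e^{−ν(ρ)|x₀−y|/ρ} K(f)(y, ρ(x₀−y)/|x₀−y|) ρ|x₀−y|⁻² dy dρ`. -/
def Gfun (Ω : Set E3) (γ β₀ : ℝ) (k f : E3 → E3 → ℝ) (x₀ ζ : E3) : ℝ :=
  ∫ ρ in Set.Ioi (0 : ℝ), ∫ y in Ω,
    k ζ ((ρ / ‖x₀ - y‖) • (x₀ - y)) *
      Real.exp (-(nu γ β₀ ((ρ / ‖x₀ - y‖) • (x₀ - y))) * (‖x₀ - y‖ / ρ)) *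
      Kop k f y ((ρ / ‖x₀ - y‖) • (x₀ - y)) * (ρ / ‖x₀ - y‖ ^ 2)

/-- The term `III(x,ζ) = ∫₀^{τ₋(x,ζ)} e^{−ν(ζ)s} G(x−ζs, ζ) ds`. -/
def IIIfun (Ω : Set E3) (γ β₀ : ℝ) (k f : E3 → E3 → ℝ) (x ζ : E3) : ℝ :=
  ∫ s in (0 : ℝ)..(tauMinus Ω x ζ),
    Real.exp (-(nu γ β₀ ζ) * s) * Gfun Ω γ β₀ k f (x - s • ζ) ζ

/-- The damped transport of boundary data: `I(x,ζ) = g(p(x,ζ),ζ) e^{−ν(ζ)τ₋(x,ζ)}`. -/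
def Ifun (Ω : Set E3) (γ β₀ : ℝ) (g : E3 → E3 → ℝ) (x ζ : E3) : ℝ :=
  g (exitPoint Ω x ζ) ζ * Real.exp (-(nu γ β₀ ζ) * tauMinus Ω x ζ)

/-- The twice-iterated boundary term
`II(x,ζ) = ∫₀^{τ₋(x,ζ)} ∫ e^{−ν(ζ)s} k(ζ,ζ′) e^{−ν(ζ′)τ₋(x−ζs,ζ′)} g(p(x−ζs,ζ′),ζ′) dζ′ ds`. -/
def IIfun (Ω : Set E3) (γ β₀ : ℝ) (k g : E3 → E3 → ℝ) (x ζ : E3) : ℝ :=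
  ∫ s in (0 : ℝ)..(tauMinus Ω x ζ), ∫ ζ' : E3,
    Real.exp (-(nu γ β₀ ζ) * s) * k ζ ζ' *
      Real.exp (-(nu γ β₀ ζ') * tauMinus Ω (x - s • ζ) ζ') *
      g (exitPoint Ω (x - s • ζ) ζ') ζ'

section aux

variable {Ω : Set E3} {x y ζ : E3} {D d₀ : ℝ}

lemma tau_zero_mem : (0:ℝ) ∈ {t : ℝ | 0 ≤ t ∧ ∀ s ∈ Set.Ico (0 : ℝ) t, x - s • ζ ∈ Ω} := by
  refine ⟨le_refl _, fun s hs => ?_⟩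
  exact absurd hs (by simp)

lemma tau_bddAbove (hD : ∀ a ∈ Ω, ∀ b ∈ Ω, dist a b ≤ D) (hx : x ∈ Ω) (hζ : ζ ≠ 0) :
    {t : ℝ | 0 ≤ t ∧ ∀ s ∈ Set.Ico (0 : ℝ) t, x - s • ζ ∈ Ω} ⊆ Set.Iic (D / ‖ζ‖) := by
  have hζ' : 0 < ‖ζ‖ := norm_pos_iff.2 hζ
  have hD0 : 0 ≤ D := le_trans dist_nonneg (hD x hx x hx)
  intro t ht
  by_contra hlt
  simp only [Set.mem_Iic, not_le] at hlt
  obtain ⟨s, hs1, hs2⟩ := exists_between hlt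
  have hs0 : 0 ≤ s := le_trans (div_nonneg hD0 hζ'.le) hs1.le
  have hmem : x - s • ζ ∈ Ω := ht.2 s ⟨hs0, hs2⟩
  have : dist x (x - s • ζ) ≤ D := hD x hx _ hmem
  rw [dist_eq_norm] at this
  simp only [sub_sub_cancel] at this
  rw [norm_smul, Real.norm_eq_abs, abs_of_nonneg hs0] at this
  have hsD : s ≤ D / ‖ζ‖ := (le_div_iff₀ hζ').2 this
  linarith

lemma tau_nonneg (hD : ∀ a ∈ Ω, ∀ b ∈ Ω, dist a b ≤ D) (hx : x ∈ Ω) (hζ : ζ ≠ 0) :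
    0 ≤ tauMinus Ω x ζ :=
  le_csSup ((bddAbove_Iic).mono (tau_bddAbove hD hx hζ)) tau_zero_mem

lemma tau_le (hD : ∀ a ∈ Ω, ∀ b ∈ Ω, dist a b ≤ D) (hx : x ∈ Ω) (hζ : ζ ≠ 0) :
    tauMinus Ω x ζ ≤ D / ‖ζ‖ :=
  csSup_le ⟨0, tau_zero_mem⟩ (fun t ht => tau_bddAbove hD hx hζ ht)

lemma mem_of_lt_tau (hD : ∀ a ∈ Ω, ∀ b ∈ Ω, dist a b ≤ D) (hx : x ∈ Ω) (hζ : ζ ≠ 0)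
    {s : ℝ} (hs0 : 0 ≤ s) (hs : s < tauMinus Ω x ζ) : x - s • ζ ∈ Ω := by
  obtain ⟨t, ht, hst⟩ := exists_lt_of_lt_csSup ⟨0, tau_zero_mem⟩ hs
  exact ht.2 s ⟨hs0, hst⟩

lemma le_tau (hD : ∀ a ∈ Ω, ∀ b ∈ Ω, dist a b ≤ D) (hx : x ∈ Ω) (hζ : ζ ≠ 0)
    {t : ℝ} (ht0 : 0 ≤ t) (h : ∀ s ∈ Set.Ico (0:ℝ) t, x - s • ζ ∈ Ω) :
    t ≤ tauMinus Ω x ζ :=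
  le_csSup ((bddAbove_Iic).mono (tau_bddAbove hD hx hζ)) ⟨ht0, h⟩

lemma ball_subset_of_infDist (hop : IsOpen Ω) (hbd : Bornology.IsBounded Ω) (hx : x ∈ Ω)
    (hd : 0 < d₀) (hinf : d₀ ≤ Metric.infDist x (frontier Ω)) :
    Metric.ball x d₀ ⊆ Ω := by
  have hne : Ω ≠ Set.univ := by
    intro h
    rw [h] at hbd
    exact NormedSpace.unbounded_univ ℝ E3 hbd
  obtain ⟨w, hwf, hwd⟩ := exists_mem_frontier_infDist_compl_eq_dist hx hne
  intro z hz
  by_contra hzΩ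
  have h1 : Metric.infDist x Ωᶜ ≤ dist x z := Metric.infDist_le_dist_of_mem hzΩ
  have h2 : d₀ ≤ dist x w := le_trans hinf (Metric.infDist_le_dist_of_mem hwf)
  rw [hwd] at h1
  have h3 : dist x z < d₀ := by rw [dist_comm]; exact Metric.mem_ball.1 hz
  linarith

end aux

section key
variable {Ω : Set E3} {x y ζ : E3} {D d₀ : ℝ}

lemma tau_key (hconv : Convex ℝ Ω) (hD : ∀ a ∈ Ω, ∀ b ∈ Ω, dist a b ≤ D)
    (hx : x ∈ Ω) (hy : y ∈ Ω) (hζ : ζ ≠ 0) (hd : 0 < d₀)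
    (hball : Metric.ball x d₀ ⊆ Ω) (hxy : ‖x - y‖ < d₀) :
    tauMinus Ω x ζ * (1 - ‖x - y‖ / d₀) ≤ tauMinus Ω y ζ := by
  set r := ‖x - y‖ / d₀ with hr
  have hr0 : 0 ≤ r := div_nonneg (norm_nonneg _) hd.le
  have hr1 : r < 1 := (div_lt_one hd).2 hxy
  set Tx := tauMinus Ω x ζ with hTx
  have hTx0 : 0 ≤ Tx := tau_nonneg hD hx hζ
  have h1r : 0 < 1 - r := by linarith
  refine le_tau hD hy hζ (mul_nonneg hTx0 h1r.le) ?_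
  rintro s ⟨hs0, hs1⟩
  have hTxpos : 0 < Tx := by nlinarith
  obtain ⟨τ', hτ1, hτ2⟩ := exists_between (show s / (1 - r) < Tx from (div_lt_iff₀ h1r).2 hs1)
  have hτ'pos : 0 < τ' := lt_of_le_of_lt (div_nonneg hs0 h1r.le) hτ1
  set lam := s / τ' with hlam
  have hlam0 : 0 ≤ lam := div_nonneg hs0 hτ'pos.le
  have hlamlt : lam < 1 - r := by
    rw [hlam, div_lt_iff₀ hτ'pos]
    calc s = (s / (1 - r)) * (1 - r) := by field_simp
    _ < τ' * (1 - r) := by exact mul_lt_mul_of_pos_right hτ1 h1r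
    _ = (1 - r) * τ' := by ring
  have hlam1 : lam < 1 := lt_of_lt_of_le hlamlt (by linarith)
  have h1lam : 0 < 1 - lam := by linarith
  have ha : x - τ' • ζ ∈ Ω := mem_of_lt_tau hD hx hζ hτ'pos.le hτ2
  have hw : x + (1 - lam)⁻¹ • (y - x) ∈ Ω := by
    apply hball
    rw [Metric.mem_ball, dist_eq_norm]
    have : x + (1 - lam)⁻¹ • (y - x) - x = (1 - lam)⁻¹ • (y - x) := by abel
    rw [this, norm_smul, Real.norm_eq_abs, abs_of_pos (inv_pos.2 h1lam)]
    have hyx : ‖y - x‖ = ‖x - y‖ := norm_sub_rev _ _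
    rw [hyx, inv_mul_lt_iff₀ h1lam]
    have hrd : ‖x - y‖ = r * d₀ := by rw [hr]; field_simp
    rw [hrd]
    have : r * d₀ < (1 - lam) * d₀ := by
      apply mul_lt_mul_of_pos_right _ hd
      linarith
    linarith [this]
  have hlamtau : lam * τ' = s := by rw [hlam]; field_simp
  have hkey : y - s • ζ = lam • (x - τ' • ζ) + (1 - lam) • (x + (1 - lam)⁻¹ • (y - x)) := by
    have h1 : (1 - lam) • ((1 - lam)⁻¹ • (y - x)) = y - x := smul_inv_smul₀ h1lam.ne' _
    rw [smul_sub, smul_add, h1, smul_smul, hlamtau, sub_smul, one_smul]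
    abel
  rw [hkey]
  exact hconv ha hw hlam0 h1lam.le (by ring)

end key


/-- Lipschitz continuity of the exit point and exit time in the space variable
(Proposition 3.1). -/
theorem stmt_6 (Ω : Set E3) (hne : Ω.Nonempty) (hbd : Bornology.IsBounded Ω)
    (hop : IsOpen Ω) (hconv : Convex ℝ Ω) :
    ∃ C₆ : ℝ, 0 < C₆ ∧ ∀ d₀ : ℝ, 0 < d₀ → ∀ x ∈ Ω, ∀ y ∈ Ω,
      d₀ ≤ Metric.infDist x (frontier Ω) → d₀ ≤ Metric.infDist y (frontier Ω) →
      ∀ ζ : E3, ζ ≠ 0 →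
        ‖exitPoint Ω x ζ - exitPoint Ω y ζ‖ ≤ C₆ * (1 + d₀⁻¹) * ‖x - y‖ ∧
        |tauMinus Ω x ζ - tauMinus Ω y ζ| ≤ C₆ * (1 + d₀⁻¹) * ‖x - y‖ / ‖ζ‖ := by
  obtain ⟨D₀, hD₀⟩ := Metric.isBounded_iff.mp hbd
  set D := max D₀ 0 with hDdef
  have hD : ∀ a ∈ Ω, ∀ b ∈ Ω, dist a b ≤ D := fun a ha b hb =>
    le_trans (hD₀ ha hb) (le_max_left _ _)
  have hD0 : (0:ℝ) ≤ D := le_max_right _ _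
  refine ⟨D + 1, by linarith, ?_⟩
  intro d₀ hd x hx y hy hix hiy ζ hζ
  have hζn : (0:ℝ) < ‖ζ‖ := norm_pos_iff.2 hζ
  set Tx := tauMinus Ω x ζ with hTxdef
  set Ty := tauMinus Ω y ζ with hTydef
  set B := D / ‖ζ‖ with hBdef
  set r := ‖x - y‖ / d₀ with hrdef
  have hB0 : 0 ≤ B := div_nonneg hD0 hζn.le
  have hr0 : 0 ≤ r := div_nonneg (norm_nonneg _) hd.le
  have hTxB : Tx ≤ B := tau_le hD hx hζ
  have hTyB : Ty ≤ B := tau_le hD hy hζ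
  have hTx0 : 0 ≤ Tx := tau_nonneg hD hx hζ
  have hTy0 : 0 ≤ Ty := tau_nonneg hD hy hζ
  have hBr : |Tx - Ty| ≤ B * r := by
    rcases lt_or_ge ‖x - y‖ d₀ with hlt | hge
    · have hbx := ball_subset_of_infDist hop hbd hx hd hix
      have hby := ball_subset_of_infDist hop hbd hy hd hiy
      have h1 : Tx * (1 - r) ≤ Ty := tau_key hconv hD hx hy hζ hd hbx hlt
      have h2 : Ty * (1 - r) ≤ Tx := by
        have := tau_key hconv hD hy hx hζ hd hby (by rwa [norm_sub_rev])
        rwa [norm_sub_rev y x] at this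
      rw [abs_sub_le_iff]
      constructor
      · nlinarith
      · nlinarith
    · have hr1 : 1 ≤ r := (one_le_div hd).2 hge
      rw [abs_sub_le_iff]
      constructor
      · nlinarith
      · nlinarith
  have hnum : D * (‖x - y‖ * d₀⁻¹) ≤ (D + 1) * (1 + d₀⁻¹) * ‖x - y‖ := by
    have h1 : 0 ≤ d₀⁻¹ := inv_nonneg.2 hd.le
    nlinarith [norm_nonneg (x - y)]
  have hBreq : B * r = D * (‖x - y‖ * d₀⁻¹) / ‖ζ‖ := by
    rw [hBdef, hrdef, eq_div_iff hζn.ne']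
    field_simp
  have htau : |Tx - Ty| ≤ (D + 1) * (1 + d₀⁻¹) * ‖x - y‖ / ‖ζ‖ := by
    refine le_trans hBr ?_
    rw [hBreq]
    gcongr
  refine ⟨?_, htau⟩
  have hdiff : exitPoint Ω x ζ - exitPoint Ω y ζ = (x - y) - (Tx - Ty) • ζ := by
    simp only [exitPoint, sub_smul, ← hTxdef, ← hTydef]
    abel
  have hnorm : ‖exitPoint Ω x ζ - exitPoint Ω y ζ‖ ≤ ‖x - y‖ + |Tx - Ty| * ‖ζ‖ := by
    rw [hdiff]
    refine le_trans (norm_sub_le _ _) ?_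
    rw [norm_smul, Real.norm_eq_abs]
  have hmul : |Tx - Ty| * ‖ζ‖ ≤ D * (‖x - y‖ * d₀⁻¹) := by
    have := mul_le_mul_of_nonneg_right hBr hζn.le
    refine le_trans this (le_of_eq ?_)
    rw [hBreq, div_mul_cancel₀ _ hζn.ne']
  refine le_trans hnorm ?_
  have h1 : 0 ≤ d₀⁻¹ := inv_nonneg.2 hd.le
  nlinarith [norm_nonneg (x - y)]
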